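/- Let a be a real number. As z = x + iy → a in ℂ, the expansion D_0(z)² = 4 (A_2(a) A_0(a) − A_1(a)²) y² + o(|z − a|²) holds; that is, (B_0(z)² − |A_0(z)|² − 4(A_2(a)A_0(a) − A_1(a)²) y²) / |z − a|² → 0 as z → a. -/

import Mathlib

open Complex Finset Filter Topology Asymptotics ComplexConjugate

private lemma deriv_im_zero {f : ℂ → ℂ} (hf : Differentiable ℂ f)
    (hreal : ∀ x : ℝ, (f x).im = 0) (a : ℝ) : (deriv f a).im = 0 := by
  have h1 : HasDerivAt (fun x : ℝ => f x) (deriv f a) a :=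
    (hf (a : ℂ)).hasDerivAt.comp_ofReal
  have h2 : HasDerivAt (fun x : ℝ => (f (x : ℂ)).im) (deriv f a).im a := by
    have := Complex.imCLM.hasFDerivAt.comp_hasDerivAt a h1
    exact this
  have h3 : HasDerivAt (fun x : ℝ => (f (x : ℂ)).im) 0 a := by
    have : (fun x : ℝ => (f (x : ℂ)).im) = fun _ => (0 : ℝ) := funext fun x => hreal x
    rw [this]; exact hasDerivAt_const a 0
  exact h2.unique h3

private lemma isLittleO_conj {α : Type*} {l : Filter α} {f : α → ℂ} {g : α → ℂ}
    (h : f =o[l] g) : (fun x => conj (f x)) =o[l] g :=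
  Asymptotics.isLittleO_norm_left.mp (by simpa using h.norm_left)

private lemma pair_sum_identity (m : ℕ) (p q : Fin m → ℝ) :
    ∑ j, ∑ k, 2 * (p j * q k - q j * p k) ^ 2
      = 4 * ((∑ j, p j ^ 2) * (∑ k, q k ^ 2) - (∑ j, p j * q j) ^ 2) := by
  have e1 : ∑ j : Fin m, ∑ k : Fin m, (p j ^ 2) * (q k ^ 2)
      = (∑ j, p j ^ 2) * (∑ k, q k ^ 2) := (Finset.sum_mul_sum _ _ _ _).symm
  have e2 : ∑ j : Fin m, ∑ k : Fin m, (q j ^ 2) * (p k ^ 2)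
      = (∑ j, q j ^ 2) * (∑ k, p k ^ 2) := (Finset.sum_mul_sum _ _ _ _).symm
  have e3 : ∑ j : Fin m, ∑ k : Fin m, (p j * q j) * (p k * q k)
      = (∑ j, p j * q j) * (∑ k, p k * q k) := (Finset.sum_mul_sum _ _ _ _).symm
  calc ∑ j, ∑ k, 2 * (p j * q k - q j * p k) ^ 2
      = ∑ j : Fin m, ∑ k : Fin m, (2 * ((p j ^ 2) * (q k ^ 2)) + 2 * ((q j ^ 2) * (p k ^ 2))
          - 4 * ((p j * q j) * (p k * q k))) := by
        refine Finset.sum_congr rfl fun j _ => Finset.sum_congr rfl fun k _ => by ring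
    _ = 2 * (∑ j : Fin m, ∑ k : Fin m, (p j ^ 2) * (q k ^ 2))
        + 2 * (∑ j : Fin m, ∑ k : Fin m, (q j ^ 2) * (p k ^ 2))
        - 4 * (∑ j : Fin m, ∑ k : Fin m, (p j * q j) * (p k * q k)) := by
        simp [Finset.sum_add_distrib, Finset.sum_sub_distrib, Finset.mul_sum]
    _ = _ := by rw [e1, e2, e3]; ring

private lemma lagrange {m : ℕ} (u : Fin m → ℂ) :
    (∑ j, ‖u j‖ ^ 2) ^ 2 - ‖∑ j, (u j) ^ 2‖ ^ 2
      = ∑ j, ∑ k, 2 * ((u j * conj (u k)).im) ^ 2 := by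
  have key : ∀ v : ℂ, Complex.normSq v - (v ^ 2).re = 2 * v.im ^ 2 := by
    intro v
    simp only [Complex.normSq_apply, sq, Complex.mul_re]
    ring
  have h1 : (∑ j, ‖u j‖ ^ 2) ^ 2
      = ∑ j : Fin m, ∑ k : Fin m, Complex.normSq (u j * conj (u k)) := by
    simp only [Complex.sq_norm]
    rw [sq, Finset.sum_mul_sum]
    exact Finset.sum_congr rfl fun j _ => Finset.sum_congr rfl fun k _ => by
      rw [Complex.normSq_mul, Complex.normSq_conj]
  have h2 : (‖∑ j, (u j) ^ 2‖ ^ 2 : ℝ)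
      = ∑ j : Fin m, ∑ k : Fin m, ((u j * conj (u k)) ^ 2).re := by
    rw [Complex.sq_norm]
    have : ((∑ j, (u j) ^ 2) * conj (∑ k, (u k) ^ 2)).re = Complex.normSq (∑ j, (u j) ^ 2) := by
      rw [Complex.mul_conj]; simp
    rw [← this, map_sum, Finset.sum_mul_sum, Complex.re_sum]
    refine Finset.sum_congr rfl fun j _ => ?_
    rw [Complex.re_sum]
    refine Finset.sum_congr rfl fun k _ => ?_
    congr 1
    rw [map_pow]
    ring
  rw [h1, h2, ← Finset.sum_sub_distrib]
  refine Finset.sum_congr rfl fun j _ => ?_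
  rw [← Finset.sum_sub_distrib]
  exact Finset.sum_congr rfl fun k _ => key _
theorem D0_sq_expansion
    {n : ℕ} (f : Fin (n + 1) → ℂ → ℂ)
    (hf_entire : ∀ j, Differentiable ℂ (f j))
    (hf_real : ∀ j, ∀ x : ℝ, (f j (x : ℂ)).im = 0)
    (A0 A1 A2 : ℂ → ℂ) (B0 : ℂ → ℝ)
    (hA0 : ∀ z, A0 z = ∑ j, (f j z) ^ 2)
    (hA1 : ∀ z, A1 z = ∑ j, f j z * deriv (f j) z)
    (hA2 : ∀ z, A2 z = ∑ j, (deriv (f j) z) ^ 2)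
    (hB0 : ∀ z, B0 z = ∑ j, ‖f j z‖ ^ 2)
    (a : ℝ) :
    Tendsto
      (fun z : ℂ =>
        (((B0 z : ℂ) ^ 2 - (‖A0 z‖ ^ 2 : ℝ)
            - 4 * (A2 (a : ℂ) * A0 (a : ℂ) - (A1 (a : ℂ)) ^ 2) * (z.im : ℂ) ^ 2)
          / (‖z - (a : ℂ)‖ ^ 2 : ℝ)))
      (𝓝[{(a : ℂ)}ᶜ] (a : ℂ)) (𝓝 0) := by
  classical
  set c : Fin (n + 1) → ℝ := fun j => (f j (a : ℂ)).re with hcdef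
  set d : Fin (n + 1) → ℝ := fun j => (deriv (f j) (a : ℂ)).re with hddef
  have hfc : ∀ j, f j (a : ℂ) = ((c j : ℝ) : ℂ) := fun j =>
    Complex.ext (by simp [hcdef]) (by simp [hf_real j a])
  have hfd : ∀ j, deriv (f j) (a : ℂ) = ((d j : ℝ) : ℂ) := fun j =>
    Complex.ext (by simp [hddef]) (by simp [deriv_im_zero (hf_entire j) (hf_real j) a])
  set w : Fin (n + 1) → Fin (n + 1) → ℝ := fun j k => d j * c k - c j * d k with hwdef
  -- first order expansions
  have heps : ∀ j, (fun z : ℂ => f j z - (c j : ℂ) - (d j : ℂ) * (z - (a : ℂ)))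
      =o[𝓝 (a : ℂ)] (fun z => z - (a : ℂ)) := by
    intro j
    have h := hasDerivAt_iff_isLittleO.mp (hf_entire j (a : ℂ)).hasDerivAt
    refine (h.congr_left fun z => ?_)
    rw [hfc j, hfd j, smul_eq_mul]
    ring
  -- expansion of the products f j z * conj (f k z)
  have hR : ∀ j k, (fun z : ℂ => f j z * conj (f k z) - (c j : ℂ) * (c k : ℂ)
        - (d j : ℂ) * (c k : ℂ) * (z - (a : ℂ))
        - (c j : ℂ) * (d k : ℂ) * conj (z - (a : ℂ)))
      =o[𝓝 (a : ℂ)] (fun z => z - (a : ℂ)) := by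
    intro j k
    have hconj0 : Tendsto (fun z : ℂ => conj (z - (a : ℂ))) (𝓝 (a : ℂ)) (𝓝 0) := by
      have : Continuous fun z : ℂ => conj (z - (a : ℂ)) :=
        Complex.continuous_conj.comp (continuous_id.sub continuous_const)
      simpa using this.tendsto (a : ℂ)
    have hT1 : (fun z : ℂ => ((d j : ℂ) * (d k : ℂ)) * ((z - (a : ℂ)) * conj (z - (a : ℂ))))
        =o[𝓝 (a : ℂ)] (fun z => z - (a : ℂ)) := by
      have := (isBigO_refl (fun z : ℂ => z - (a : ℂ)) (𝓝 (a : ℂ))).mul_isLittleO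
        ((isLittleO_one_iff ℂ).mpr hconj0)
      simpa using this.const_mul_left ((d j : ℂ) * (d k : ℂ))
    have hO1 : (fun z : ℂ => (c j : ℂ) + (d j : ℂ) * (z - (a : ℂ)))
        =O[𝓝 (a : ℂ)] (fun _ => (1 : ℂ)) := by
      have : Continuous fun z : ℂ => (c j : ℂ) + (d j : ℂ) * (z - (a : ℂ)) :=
        continuous_const.add (continuous_const.mul (continuous_id.sub continuous_const))
      exact (this.tendsto (a : ℂ)).isBigO_one ℂ
    have hT2 : (fun z : ℂ => ((c j : ℂ) + (d j : ℂ) * (z - (a : ℂ)))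
        * conj (f k z - (c k : ℂ) - (d k : ℂ) * (z - (a : ℂ))))
        =o[𝓝 (a : ℂ)] (fun z => z - (a : ℂ)) := by
      have := hO1.mul_isLittleO (isLittleO_conj (heps k))
      simpa using this
    have hO2 : (fun z : ℂ => (c k : ℂ) + (d k : ℂ) * conj (z - (a : ℂ)))
        =O[𝓝 (a : ℂ)] (fun _ => (1 : ℂ)) := by
      have : Continuous fun z : ℂ => (c k : ℂ) + (d k : ℂ) * conj (z - (a : ℂ)) :=
        continuous_const.add (continuous_const.mul
          (Complex.continuous_conj.comp (continuous_id.sub continuous_const)))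
      exact (this.tendsto (a : ℂ)).isBigO_one ℂ
    have hT3 : (fun z : ℂ => (f j z - (c j : ℂ) - (d j : ℂ) * (z - (a : ℂ)))
        * ((c k : ℂ) + (d k : ℂ) * conj (z - (a : ℂ))))
        =o[𝓝 (a : ℂ)] (fun z => z - (a : ℂ)) := by
      have := (heps j).mul_isBigO hO2
      simpa using this
    have hO3 : (fun z : ℂ => conj (f k z - (c k : ℂ) - (d k : ℂ) * (z - (a : ℂ))))
        =O[𝓝 (a : ℂ)] (fun _ => (1 : ℂ)) := by
      have h0 : Tendsto (fun z : ℂ => f k z - (c k : ℂ) - (d k : ℂ) * (z - (a : ℂ)))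
          (𝓝 (a : ℂ)) (𝓝 0) := by
        have hc : Continuous fun z : ℂ => f k z - (c k : ℂ) - (d k : ℂ) * (z - (a : ℂ)) := by
          exact ((hf_entire k).continuous.sub continuous_const).sub
            (continuous_const.mul (continuous_id.sub continuous_const))
        have := hc.tendsto (a : ℂ)
        simpa [hfc k] using this
      have h1 := (Complex.continuous_conj.tendsto 0).comp h0
      simp only [Function.comp_def, map_zero] at h1
      exact h1.isBigO_one ℂ
    have hT4 : (fun z : ℂ => (f j z - (c j : ℂ) - (d j : ℂ) * (z - (a : ℂ)))
        * conj (f k z - (c k : ℂ) - (d k : ℂ) * (z - (a : ℂ))))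
        =o[𝓝 (a : ℂ)] (fun z => z - (a : ℂ)) := by
      have := (heps j).mul_isBigO hO3
      simpa using this
    have hsum := ((hT1.add hT2).add hT3).add hT4
    refine hsum.congr_left fun z => ?_
    simp only [map_sub, map_mul, Complex.conj_ofReal]
    ring
  -- imaginary part expansion
  have hIm : ∀ j k, (fun z : ℂ => (f j z * conj (f k z)).im - w j k * z.im)
      =o[𝓝 (a : ℂ)] (fun z => z - (a : ℂ)) := by
    intro j k
    have h := (Complex.imCLM.isBigO_comp _ (𝓝 (a : ℂ))).trans_isLittleO (hR j k)
    refine h.congr_left fun z => ?_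
    simp only [Complex.imCLM_apply, Complex.sub_im, Complex.mul_im, Complex.mul_re,
      Complex.ofReal_re, Complex.ofReal_im, Complex.conj_re, Complex.conj_im,
      Complex.sub_re, hwdef]
    ring
  -- y = O(z - a)
  have hY : (fun z : ℂ => z.im) =O[𝓝 (a : ℂ)] (fun z => z - (a : ℂ)) := by
    refine IsBigO.of_bound 1 (Filter.Eventually.of_forall fun z => ?_)
    have : z.im = (z - (a : ℂ)).im := by simp
    rw [this, one_mul]
    simpa using Complex.abs_im_le_norm (z - (a : ℂ))
  have hPlus : ∀ j k, (fun z : ℂ => (f j z * conj (f k z)).im + w j k * z.im)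
      =O[𝓝 (a : ℂ)] (fun z => z - (a : ℂ)) := by
    intro j k
    have := (hIm j k).isBigO.add ((hY.const_mul_left (2 * w j k)))
    refine this.congr_left fun z => ?_
    ring
  have hPair : ∀ j k, (fun z : ℂ => 2 * (((f j z * conj (f k z)).im) ^ 2 - (w j k) ^ 2 * z.im ^ 2))
      =o[𝓝 (a : ℂ)] (fun z => (z - (a : ℂ)) * (z - (a : ℂ))) := by
    intro j k
    have := ((hIm j k).mul_isBigO (hPlus j k)).const_mul_left 2
    refine this.congr_left fun z => ?_
    ring
  set S : ℂ → ℝ := fun z => ∑ j, ∑ k,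
      2 * (((f j z * conj (f k z)).im) ^ 2 - (w j k) ^ 2 * z.im ^ 2) with hSdef
  have hS : S =o[𝓝 (a : ℂ)] (fun z => (z - (a : ℂ)) * (z - (a : ℂ))) := by
    refine (IsLittleO.sum fun j (_ : j ∈ Finset.univ) =>
      IsLittleO.sum fun k (_ : k ∈ Finset.univ) => hPair j k).congr_left fun z => by
      simp [hSdef, Finset.sum_apply]
  -- algebraic identification of the numerator
  have hA0a : A0 (a : ℂ) = ((∑ j, (c j) ^ 2 : ℝ) : ℂ) := by
    rw [hA0]
    push_cast
    exact Finset.sum_congr rfl fun j _ => by rw [hfc j]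
  have hA1a : A1 (a : ℂ) = ((∑ j, c j * d j : ℝ) : ℂ) := by
    rw [hA1]
    push_cast
    exact Finset.sum_congr rfl fun j _ => by rw [hfc j, hfd j]
  have hA2a : A2 (a : ℂ) = ((∑ j, (d j) ^ 2 : ℝ) : ℂ) := by
    rw [hA2]
    push_cast
    exact Finset.sum_congr rfl fun j _ => by rw [hfd j]
  have hwid : ∑ j, ∑ k, 2 * (w j k) ^ 2
      = 4 * ((∑ j, (d j) ^ 2) * (∑ k, (c k) ^ 2) - (∑ j, c j * d j) ^ 2) := by
    have h := pair_sum_identity (n + 1) d c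
    have h2 : (∑ j, d j * c j) = ∑ j, c j * d j :=
      Finset.sum_congr rfl fun j _ => mul_comm _ _
    simp only [hwdef]
    rw [h, h2]
  have hW : 4 * (A2 (a : ℂ) * A0 (a : ℂ) - (A1 (a : ℂ)) ^ 2)
      = ((∑ j, ∑ k, 2 * (w j k) ^ 2 : ℝ) : ℂ) := by
    rw [hA0a, hA1a, hA2a, hwid]
    push_cast
    ring
  have hLag : ∀ z, (B0 z) ^ 2 - ‖A0 z‖ ^ 2
      = ∑ j, ∑ k, 2 * ((f j z * conj (f k z)).im) ^ 2 := fun z => by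
    rw [hB0, hA0]
    exact lagrange _
  have hH : ∀ z : ℂ, ((B0 z : ℂ) ^ 2 - (‖A0 z‖ ^ 2 : ℝ)
      - 4 * (A2 (a : ℂ) * A0 (a : ℂ) - (A1 (a : ℂ)) ^ 2) * (z.im : ℂ) ^ 2)
      = ((S z : ℝ) : ℂ) := by
    intro z
    have hsplit : S z = (∑ j, ∑ k, 2 * ((f j z * conj (f k z)).im) ^ 2)
        - (∑ j, ∑ k, 2 * (w j k) ^ 2) * z.im ^ 2 := by
      rw [hSdef]
      simp only
      rw [Finset.sum_mul, ← Finset.sum_sub_distrib]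
      refine Finset.sum_congr rfl fun j _ => ?_
      rw [Finset.sum_mul, ← Finset.sum_sub_distrib]
      exact Finset.sum_congr rfl fun k _ => by ring
    rw [hW, hsplit, ← hLag z]
    push_cast
    ring
  -- conclude
  have hN : (fun z : ℂ => ((B0 z : ℂ) ^ 2 - (‖A0 z‖ ^ 2 : ℝ)
      - 4 * (A2 (a : ℂ) * A0 (a : ℂ) - (A1 (a : ℂ)) ^ 2) * (z.im : ℂ) ^ 2))
      =o[𝓝 (a : ℂ)] (fun z : ℂ => ((‖z - (a : ℂ)‖ ^ 2 : ℝ) : ℂ)) := by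
    rw [Asymptotics.isLittleO_iff]
    intro ε hε
    filter_upwards [Asymptotics.isLittleO_iff.mp hS hε] with z hz
    rw [hH z]
    calc ‖((S z : ℝ) : ℂ)‖ = ‖S z‖ := by simp
      _ ≤ ε * ‖(z - (a : ℂ)) * (z - (a : ℂ))‖ := hz
      _ = ε * ‖((‖z - (a : ℂ)‖ ^ 2 : ℝ) : ℂ)‖ := by
          simp [sq]
  exact (hN.mono nhdsWithin_le_nhds).tendsto_div_nhds_zero
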